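/- Sub-Leibniz rule: let f, g, h be locally Lipschitz on a metric space X with f ≥ 0 and h ≥ 0. Then D⁺(fh)(∇g)(x) ≤ f(x)·D⁺h(∇g)(x) + h(x)·D⁺f(∇g)(x) for every x ∈ X, where D⁺u(∇g)(x) := inf_{ε>0} (lip(g+εu)²(x) − lip(g)²(x))/(2ε). -/

import Mathlib

open Filter Metric MeasureTheory Topology

variable {X : Type*} [MetricSpace X]


open Classical in
noncomputable def lipSlope (f : X → ℝ) (x : X) : ℝ :=
  if (𝓝[≠] x) = ⊥ then 0
  else Filter.limsup (fun y => |f x - f y| / dist x y) (𝓝[≠] x)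

noncomputable def Dplus (f g : X → ℝ) (x : X) : ℝ :=
  sInf ((fun ε : ℝ =>
    ((lipSlope (fun y => g y + ε * f y) x) ^ 2 - (lipSlope g x) ^ 2) / (2 * ε)) '' Set.Ioi 0)

noncomputable def Dminus (f g : X → ℝ) (x : X) : ℝ :=
  sSup ((fun ε : ℝ =>
    ((lipSlope (fun y => g y + ε * f y) x) ^ 2 - (lipSlope g x) ^ 2) / (2 * ε)) '' Set.Iio 0)


/-- eventual Lipschitz-type bound near `x` -/
def EvB (u : X → ℝ) (x : X) : Prop :=
  ∃ K : ℝ, 0 ≤ K ∧ ∀ᶠ y in 𝓝 x, |u x - u y| ≤ K * dist x y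

lemma evB_of_locallyLipschitz {u : X → ℝ} (hu : LocallyLipschitz u) (x : X) : EvB u x := by
  obtain ⟨K, t, ht, hK⟩ := hu x
  refine ⟨K, K.coe_nonneg, ?_⟩
  filter_upwards [ht] with y hy
  have := hK.dist_le_mul x (mem_of_mem_nhds ht) y hy
  simpa [Real.dist_eq] using this

lemma EvB.add {u v : X → ℝ} {x : X} (hu : EvB u x) (hv : EvB v x) :
    EvB (fun y => u y + v y) x := by
  obtain ⟨K, hK0, hK⟩ := hu; obtain ⟨L, hL0, hL⟩ := hv
  refine ⟨K + L, by linarith, ?_⟩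
  filter_upwards [hK, hL] with y h1 h2
  have h3 : (u x + v x) - (u y + v y) = (u x - u y) + (v x - v y) := by ring
  rw [h3]
  calc |(u x - u y) + (v x - v y)| ≤ |u x - u y| + |v x - v y| := abs_add_le _ _
    _ ≤ K * dist x y + L * dist x y := by linarith
    _ = (K + L) * dist x y := by ring

lemma EvB.const_mul {u : X → ℝ} {x : X} (hu : EvB u x) (c : ℝ) :
    EvB (fun y => c * u y) x := by
  obtain ⟨K, hK0, hK⟩ := hu
  refine ⟨|c| * K, by positivity, ?_⟩
  filter_upwards [hK] with y h1
  have h3 : c * u x - c * u y = c * (u x - u y) := by ring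
  rw [h3, abs_mul, mul_assoc]
  exact mul_le_mul_of_nonneg_left h1 (abs_nonneg c)

lemma EvB.mul {u v : X → ℝ} {x : X} (hu : EvB u x) (hv : EvB v x) :
    EvB (fun y => u y * v y) x := by
  obtain ⟨K, hK0, hK⟩ := hu; obtain ⟨L, hL0, hL⟩ := hv
  refine ⟨|u x| * L + (|v x| + L) * K, by positivity, ?_⟩
  have hball : ∀ᶠ y in 𝓝 x, dist x y ≤ 1 := by
    filter_upwards [Metric.closedBall_mem_nhds x one_pos] with y hy
    simpa [dist_comm] using hy
  filter_upwards [hK, hL, hball] with y h1 h2 h3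
  have h4 : u x * v x - u y * v y = u x * (v x - v y) + v y * (u x - u y) := by ring
  have h5 : |v y| ≤ |v x| + L := by
    have : |v y| - |v x| ≤ |v x - v y| := by
      have := abs_sub_abs_le_abs_sub (v y) (v x)
      rwa [abs_sub_comm] at this
    nlinarith [mul_nonneg hL0 (dist_nonneg (x := x) (y := y)), mul_le_mul_of_nonneg_left h3 hL0]
  rw [h4]
  calc |u x * (v x - v y) + v y * (u x - u y)|
      ≤ |u x| * |v x - v y| + |v y| * |u x - u y| := by
        refine (abs_add_le _ _).trans ?_
        rw [abs_mul, abs_mul]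
    _ ≤ |u x| * (L * dist x y) + (|v x| + L) * (K * dist x y) := by
        have e1 := mul_le_mul_of_nonneg_left h2 (abs_nonneg (u x))
        have e2 : |v y| * |u x - u y| ≤ (|v x| + L) * (K * dist x y) := by
          have e3 : |v y| * |u x - u y| ≤ (|v x| + L) * |u x - u y| :=
            mul_le_mul_of_nonneg_right h5 (abs_nonneg _)
          exact e3.trans (mul_le_mul_of_nonneg_left h1 (by positivity))
        linarith
    _ = (|u x| * L + (|v x| + L) * K) * dist x y := by ring

/-- bound for the difference quotient on the punctured neighborhood filter -/
lemma evB_q_le {u : X → ℝ} {x : X} (hu : EvB u x) :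
    ∃ K : ℝ, 0 ≤ K ∧ ∀ᶠ y in 𝓝[≠] x, |u x - u y| / dist x y ≤ K := by
  obtain ⟨K, hK0, hK⟩ := hu
  refine ⟨K, hK0, ?_⟩
  filter_upwards [hK.filter_mono nhdsWithin_le_nhds, self_mem_nhdsWithin] with y h1 h2
  have hd : 0 < dist x y := dist_pos.2 (Ne.symm h2)
  exact (div_le_iff₀ hd).2 (by linarith [h1, mul_comm K (dist x y)])


lemma lipSlope_nonneg {u : X → ℝ} {x : X} (hu : EvB u x) : 0 ≤ lipSlope u x := by
  unfold lipSlope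
  split_ifs with hb
  · exact le_refl 0
  · haveI : (𝓝[≠] x).NeBot := ⟨hb⟩
    obtain ⟨K, hK0, hK⟩ := evB_q_le hu
    refine le_limsup_of_frequently_le ?_ ⟨K, eventually_map.2 hK⟩
    exact (Filter.Eventually.of_forall fun y =>
      div_nonneg (abs_nonneg _) dist_nonneg).frequently

lemma lipSlope_le_combo {x : X} {u v w : X → ℝ} {s t : ℝ} (hs : 0 ≤ s) (ht : 0 ≤ t)
    (hv : EvB v x) (hw : EvB w x)
    (hq : ∀ δ : ℝ, 0 < δ → ∀ᶠ y in 𝓝[≠] x,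
      |u x - u y| / dist x y ≤
        s * (|v x - v y| / dist x y) + t * (|w x - w y| / dist x y) + δ) :
    lipSlope u x ≤ s * lipSlope v x + t * lipSlope w x := by
  by_cases hb : (𝓝[≠] x) = ⊥
  · simp [lipSlope, hb]
  haveI : (𝓝[≠] x).NeBot := ⟨hb⟩
  simp only [lipSlope, if_neg hb]
  obtain ⟨KV, hKV0, hKV⟩ := evB_q_le hv
  obtain ⟨KW, hKW0, hKW⟩ := evB_q_le hw
  have hbv : IsBoundedUnder (· ≤ ·) (𝓝[≠] x) (fun y => |v x - v y| / dist x y) :=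
    ⟨KV, eventually_map.2 hKV⟩
  have hbw : IsBoundedUnder (· ≤ ·) (𝓝[≠] x) (fun y => |w x - w y| / dist x y) :=
    ⟨KW, eventually_map.2 hKW⟩
  set LV := limsup (fun y => |v x - v y| / dist x y) (𝓝[≠] x) with hLV
  set LW := limsup (fun y => |w x - w y| / dist x y) (𝓝[≠] x) with hLW
  have key : ∀ δ : ℝ, 0 < δ →
      limsup (fun y => |u x - u y| / dist x y) (𝓝[≠] x) ≤ s * LV + t * LW + (s + t + 1) * δ := by
    intro δ hδ
    have h1 : ∀ᶠ y in 𝓝[≠] x, |v x - v y| / dist x y < LV + δ :=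
      eventually_lt_of_limsup_lt (by linarith) hbv
    have h2 : ∀ᶠ y in 𝓝[≠] x, |w x - w y| / dist x y < LW + δ :=
      eventually_lt_of_limsup_lt (by linarith) hbw
    refine limsup_le_of_le
      (isCoboundedUnder_le_of_le _ fun y => div_nonneg (abs_nonneg _) dist_nonneg) ?_
    filter_upwards [h1, h2, hq δ hδ] with y e1 e2 e3
    have e4 : s * (|v x - v y| / dist x y) ≤ s * (LV + δ) :=
      mul_le_mul_of_nonneg_left e1.le hs
    have e5 : t * (|w x - w y| / dist x y) ≤ t * (LW + δ) :=
      mul_le_mul_of_nonneg_left e2.le ht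
    calc |u x - u y| / dist x y ≤ _ + _ + δ := e3
      _ ≤ s * (LV + δ) + t * (LW + δ) + δ := by linarith
      _ = s * LV + t * LW + (s + t + 1) * δ := by ring
  by_contra hcon
  push_neg at hcon
  set D := limsup (fun y => |u x - u y| / dist x y) (𝓝[≠] x)
  have hst : (0:ℝ) < s + t + 1 := by linarith
  have hpos : 0 < D - (s * LV + t * LW) := sub_pos.2 hcon
  have := key ((D - (s * LV + t * LW)) / (s + t + 1) / 2)
    (div_pos (div_pos hpos hst) two_pos)
  have hfin : (s + t + 1) * ((D - (s * LV + t * LW)) / (s + t + 1) / 2)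
      = (D - (s * LV + t * LW)) / 2 := by field_simp
  rw [hfin] at this
  linarith

lemma evB_combo {g u : X → ℝ} {x : X} (hg : EvB g x) (hu : EvB u x) (ε : ℝ) :
    EvB (fun y => g y + ε * u y) x :=
  hg.add (hu.const_mul ε)

noncomputable def Efn (g u : X → ℝ) (x : X) (ε : ℝ) : ℝ :=
  ((lipSlope (fun y => g y + ε * u y) x) ^ 2 - (lipSlope g x) ^ 2) / (2 * ε)

lemma sq_combo {s t a b c : ℝ} (hs : 0 ≤ s) (ht : 0 ≤ t) (hst : s + t = 1)
    (hc : 0 ≤ c) (ha : 0 ≤ a) (hb : 0 ≤ b) (h : c ≤ s * a + t * b) :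
    c ^ 2 ≤ s * a ^ 2 + t * b ^ 2 := by
  have h1 : c ^ 2 ≤ (s * a + t * b) ^ 2 := by nlinarith
  have h2 : (s * a + t * b) ^ 2 ≤ s * a ^ 2 + t * b ^ 2 := by
    nlinarith [mul_nonneg (mul_nonneg hs ht) (sq_nonneg (a - b))]
  linarith

/-- `lipSlope g ≤ lipSlope (g + εu) + ε lipSlope u`. -/
lemma lipSlope_subadd {g u : X → ℝ} {x : X} (hg : EvB g x) (hu : EvB u x)
    {ε : ℝ} (hε : 0 < ε) :
    lipSlope g x ≤ 1 * lipSlope (fun y => g y + ε * u y) x + ε * lipSlope u x := by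
  refine lipSlope_le_combo zero_le_one hε.le (evB_combo hg hu ε) hu ?_
  intro δ hδ
  filter_upwards [self_mem_nhdsWithin] with y (hy : y ∈ ({x}ᶜ : Set X))
  have hd : 0 < dist x y := dist_pos.2 (Ne.symm hy)
  have hnum : |g x - g y| ≤
      1 * |(g x + ε * u x) - (g y + ε * u y)| + ε * |u x - u y| := by
    have hid : g x - g y = ((g x + ε * u x) - (g y + ε * u y)) + (-ε) * (u x - u y) := by ring
    calc |g x - g y| ≤ |(g x + ε * u x) - (g y + ε * u y)| + |(-ε) * (u x - u y)| := by
          rw [hid]; exact abs_add_le _ _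
      _ = 1 * |(g x + ε * u x) - (g y + ε * u y)| + ε * |u x - u y| := by
          rw [abs_mul, abs_neg, abs_of_nonneg hε.le]; ring
  calc |g x - g y| / dist x y
      ≤ (1 * |(g x + ε * u x) - (g y + ε * u y)| + ε * |u x - u y|) / dist x y := by
        gcongr
    _ = 1 * (|(g x + ε * u x) - (g y + ε * u y)| / dist x y)
        + ε * (|u x - u y| / dist x y) := by ring
    _ ≤ _ := by linarith

lemma Efn_lb {g u : X → ℝ} {x : X} (hg : EvB g x) (hu : EvB u x) {ε : ℝ} (hε : 0 < ε) :
    -(lipSlope u x * lipSlope g x) ≤ Efn g u x ε := by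
  have hG0 : 0 ≤ lipSlope g x := lipSlope_nonneg hg
  have hU0 : 0 ≤ lipSlope u x := lipSlope_nonneg hu
  have hL0 : 0 ≤ lipSlope (fun y => g y + ε * u y) x := lipSlope_nonneg (evB_combo hg hu ε)
  have hGL := lipSlope_subadd hg hu hε
  set G := lipSlope g x
  set U := lipSlope u x
  set L := lipSlope (fun y => g y + ε * u y) x
  rw [Efn, le_div_iff₀ (by positivity : (0:ℝ) < 2 * ε)]
  rcases le_or_gt G L with hc | hc
  · nlinarith
  · have h1 : G - L ≤ ε * U := by linarith
    have h2 : (G - L) * (G + L) ≤ (ε * U) * (2 * G) :=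
      mul_le_mul h1 (by linarith) (by linarith) (by positivity)
    nlinarith

lemma Efn_mono {g u : X → ℝ} {x : X} (hg : EvB g x) (hu : EvB u x)
    {ε₁ ε₂ : ℝ} (h1 : 0 < ε₁) (h12 : ε₁ ≤ ε₂) :
    Efn g u x ε₁ ≤ Efn g u x ε₂ := by
  have h2 : 0 < ε₂ := lt_of_lt_of_le h1 h12
  set t : ℝ := ε₁ / ε₂ with htdef
  have ht0 : 0 < t := div_pos h1 h2
  have ht1 : t ≤ 1 := (div_le_one h2).2 h12
  have hs0 : 0 ≤ 1 - t := by linarith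
  have htε : t * ε₂ = ε₁ := div_mul_cancel₀ ε₁ h2.ne'
  have hG0 : 0 ≤ lipSlope g x := lipSlope_nonneg hg
  have hL10 : 0 ≤ lipSlope (fun y => g y + ε₁ * u y) x := lipSlope_nonneg (evB_combo hg hu ε₁)
  have hL20 : 0 ≤ lipSlope (fun y => g y + ε₂ * u y) x := lipSlope_nonneg (evB_combo hg hu ε₂)
  have hcombo : lipSlope (fun y => g y + ε₁ * u y) x ≤
      (1 - t) * lipSlope g x + t * lipSlope (fun y => g y + ε₂ * u y) x := by
    refine lipSlope_le_combo hs0 ht0.le hg (evB_combo hg hu ε₂) ?_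
    intro δ hδ
    filter_upwards [self_mem_nhdsWithin] with y (hy : y ∈ ({x}ᶜ : Set X))
    have hd : 0 < dist x y := dist_pos.2 (Ne.symm hy)
    have hid : (g x + ε₁ * u x) - (g y + ε₁ * u y)
        = (1 - t) * (g x - g y) + t * ((g x + ε₂ * u x) - (g y + ε₂ * u y)) := by
      rw [htdef]; field_simp; ring
    have hnum : |(g x + ε₁ * u x) - (g y + ε₁ * u y)| ≤
        (1 - t) * |g x - g y| + t * |(g x + ε₂ * u x) - (g y + ε₂ * u y)| := by
      rw [hid]
      refine (abs_add_le _ _).trans ?_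
      rw [abs_mul, abs_mul, abs_of_nonneg hs0, abs_of_nonneg ht0.le]
    calc |(g x + ε₁ * u x) - (g y + ε₁ * u y)| / dist x y
        ≤ ((1 - t) * |g x - g y| + t * |(g x + ε₂ * u x) - (g y + ε₂ * u y)|) / dist x y := by
          gcongr
      _ = (1 - t) * (|g x - g y| / dist x y)
          + t * (|(g x + ε₂ * u x) - (g y + ε₂ * u y)| / dist x y) := by ring
      _ ≤ _ := by linarith
  set G := lipSlope g x
  set L1 := lipSlope (fun y => g y + ε₁ * u y) x
  set L2 := lipSlope (fun y => g y + ε₂ * u y) x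
  have hsq : L1 ^ 2 ≤ (1 - t) * G ^ 2 + t * L2 ^ 2 :=
    sq_combo hs0 ht0.le (by ring) hL10 hG0 hL20 hcombo
  rw [Efn, Efn, div_le_div_iff₀ (by positivity) (by positivity)]
  have key : L1 ^ 2 - G ^ 2 ≤ t * (L2 ^ 2 - G ^ 2) := by nlinarith
  have key2 : (L1 ^ 2 - G ^ 2) * (2 * ε₂) ≤ t * (L2 ^ 2 - G ^ 2) * (2 * ε₂) :=
    mul_le_mul_of_nonneg_right key (by positivity)
  calc (L1 ^ 2 - G ^ 2) * (2 * ε₂) ≤ t * (L2 ^ 2 - G ^ 2) * (2 * ε₂) := key2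
    _ = (L2 ^ 2 - G ^ 2) * (2 * (t * ε₂)) := by ring
    _ = (L2 ^ 2 - G ^ 2) * (2 * ε₁) := by rw [htε]

set_option maxHeartbeats 2000000 in
lemma Efn_core {f g h : X → ℝ} {x : X}
    (hf : EvB f x) (hg : EvB g x) (hh : EvB h x)
    (ha0 : 0 ≤ f x) (hb0 : 0 ≤ h x) (hab : 0 < f x + h x)
    {ε : ℝ} (hε : 0 < ε) :
    Efn g (fun y => f y * h y) x (ε / (f x + h x)) ≤
      f x * Efn g h x ε + h x * Efn g f x ε := by
  obtain ⟨Kf, hKf0, hKf⟩ := id hf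
  obtain ⟨Kh, hKh0, hKh⟩ := id hh
  set a := f x with hadef
  set b := h x with hbdef
  set s : ℝ := a / (a + b) with hsdef
  set t : ℝ := b / (a + b) with htdef
  set ε' : ℝ := ε / (a + b) with hε'def
  have hs0 : 0 ≤ s := div_nonneg ha0 hab.le
  have ht0 : 0 ≤ t := div_nonneg hb0 hab.le
  have hε'0 : 0 < ε' := div_pos hε hab
  have hst : s + t = 1 := by rw [hsdef, htdef]; field_simp
  have hcombo : lipSlope (fun y => g y + ε' * (f y * h y)) x ≤
      s * lipSlope (fun y => g y + ε * h y) x + t * lipSlope (fun y => g y + ε * f y) x := by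
    refine lipSlope_le_combo hs0 ht0 (evB_combo hg hh ε) (evB_combo hg hf ε) ?_
    intro δ hδ
    set r : ℝ := δ / (ε' * Kf * Kh + 1) with hrdef
    have hr0 : 0 < r := by
      refine div_pos hδ ?_
      have : 0 ≤ ε' * Kf * Kh := by positivity
      linarith
    have hball : ∀ᶠ y in 𝓝 x, dist x y < r := by
      filter_upwards [Metric.ball_mem_nhds x hr0] with y hy
      simpa [dist_comm] using hy
    filter_upwards [hKf.filter_mono nhdsWithin_le_nhds, hKh.filter_mono nhdsWithin_le_nhds,
      hball.filter_mono nhdsWithin_le_nhds, self_mem_nhdsWithin] with y e1 e2 e3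
        (hy : y ∈ ({x}ᶜ : Set X))
    have hd : 0 < dist x y := dist_pos.2 (Ne.symm hy)
    have hid : (g x + ε' * (f x * h x)) - (g y + ε' * (f y * h y))
        = s * ((g x + ε * h x) - (g y + ε * h y))
          + t * ((g x + ε * f x) - (g y + ε * f y))
          - ε' * ((f x - f y) * (h x - h y)) := by
      rw [hsdef, htdef, hε'def, ← hadef, ← hbdef]
      field_simp
      ring
    have hnum : |(g x + ε' * (f x * h x)) - (g y + ε' * (f y * h y))| ≤
        s * |(g x + ε * h x) - (g y + ε * h y)|
          + t * |(g x + ε * f x) - (g y + ε * f y)|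
          + ε' * (|f x - f y| * |h x - h y|) := by
      rw [hid]
      calc |s * ((g x + ε * h x) - (g y + ε * h y))
            + t * ((g x + ε * f x) - (g y + ε * f y))
            - ε' * ((f x - f y) * (h x - h y))|
          ≤ |s * ((g x + ε * h x) - (g y + ε * h y))
              + t * ((g x + ε * f x) - (g y + ε * f y))|
            + |ε' * ((f x - f y) * (h x - h y))| := abs_sub _ _
        _ ≤ |s * ((g x + ε * h x) - (g y + ε * h y))|
            + |t * ((g x + ε * f x) - (g y + ε * f y))|
            + |ε' * ((f x - f y) * (h x - h y))| := by
              linarith [abs_add_le (s * ((g x + ε * h x) - (g y + ε * h y)))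
                (t * ((g x + ε * f x) - (g y + ε * f y)))]
        _ = s * |(g x + ε * h x) - (g y + ε * h y)|
            + t * |(g x + ε * f x) - (g y + ε * f y)|
            + ε' * (|f x - f y| * |h x - h y|) := by
              rw [abs_mul, abs_mul, abs_mul, abs_mul, abs_of_nonneg hs0,
                abs_of_nonneg ht0, abs_of_nonneg hε'0.le]
    have hsmall : ε' * (|f x - f y| * |h x - h y|) / dist x y ≤ δ := by
      have e4 : |f x - f y| * |h x - h y| ≤ (Kf * dist x y) * (Kh * dist x y) :=
        mul_le_mul e1 e2 (abs_nonneg _) (by positivity)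
      have e5 : ε' * (|f x - f y| * |h x - h y|) / dist x y
          ≤ ε' * ((Kf * dist x y) * (Kh * dist x y)) / dist x y := by
        gcongr
      have e6 : ε' * ((Kf * dist x y) * (Kh * dist x y)) / dist x y
          = ε' * Kf * Kh * dist x y := by field_simp
      have e7 : ε' * Kf * Kh * dist x y ≤ (ε' * Kf * Kh + 1) * r := by
        have h8 : ε' * Kf * Kh * dist x y ≤ ε' * Kf * Kh * r :=
          mul_le_mul_of_nonneg_left (le_of_lt e3) (by positivity)
        nlinarith
      have e8 : (ε' * Kf * Kh + 1) * r = δ := by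
        rw [hrdef]
        field_simp
      linarith [e5, e6 ▸ e5]
    calc |(g x + ε' * (f x * h x)) - (g y + ε' * (f y * h y))| / dist x y
        ≤ (s * |(g x + ε * h x) - (g y + ε * h y)|
            + t * |(g x + ε * f x) - (g y + ε * f y)|
            + ε' * (|f x - f y| * |h x - h y|)) / dist x y := by gcongr
      _ = s * (|(g x + ε * h x) - (g y + ε * h y)| / dist x y)
          + t * (|(g x + ε * f x) - (g y + ε * f y)| / dist x y)
          + ε' * (|f x - f y| * |h x - h y|) / dist x y := by ring
      _ ≤ _ := by linarith
  have hG0 : 0 ≤ lipSlope g x := lipSlope_nonneg hg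
  have hL00 : 0 ≤ lipSlope (fun y => g y + ε' * (f y * h y)) x :=
    lipSlope_nonneg (evB_combo hg (hf.mul hh) ε')
  have hA0 : 0 ≤ lipSlope (fun y => g y + ε * h y) x :=
    lipSlope_nonneg (evB_combo hg hh ε)
  have hB0 : 0 ≤ lipSlope (fun y => g y + ε * f y) x :=
    lipSlope_nonneg (evB_combo hg hf ε)
  set G := lipSlope g x
  set L0 := lipSlope (fun y => g y + ε' * (f y * h y)) x
  set A := lipSlope (fun y => g y + ε * h y) x
  set B := lipSlope (fun y => g y + ε * f y) x
  have hsq : L0 ^ 2 ≤ s * A ^ 2 + t * B ^ 2 :=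
    sq_combo hs0 ht0 hst hL00 hA0 hB0 hcombo
  have hεeq : ε = (a + b) * ε' := by rw [hε'def]; field_simp
  rw [Efn, Efn, Efn]
  have hrhs : a * ((A ^ 2 - G ^ 2) / (2 * ε)) + b * ((B ^ 2 - G ^ 2) / (2 * ε))
      = (a * (A ^ 2 - G ^ 2) + b * (B ^ 2 - G ^ 2)) / (2 * ε) := by ring
  rw [hrhs, div_le_div_iff₀ (by positivity) (by positivity)]
  have hmul : (L0 ^ 2 - G ^ 2) * (2 * ε) = ((a + b) * (L0 ^ 2 - G ^ 2)) * (2 * ε') := by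
    rw [hεeq]; ring
  rw [hmul]
  refine mul_le_mul_of_nonneg_right ?_ (by positivity)
  have hsa : (a + b) * s = a := by rw [hsdef]; field_simp
  have hta : (a + b) * t = b := by rw [htdef]; field_simp
  nlinarith [mul_le_mul_of_nonneg_left hsq hab.le]

lemma Efn_zero {f g h : X → ℝ} {x : X} (hf : EvB f x) (hg : EvB g x) (hh : EvB h x)
    (hfx : f x = 0) (hhx : h x = 0) {ε : ℝ} (hε : 0 < ε) :
    Efn g (fun y => f y * h y) x ε ≤ 0 := by
  obtain ⟨Kf, hKf0, hKf⟩ := id hf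
  obtain ⟨Kh, hKh0, hKh⟩ := id hh
  have hL : lipSlope (fun y => g y + ε * (f y * h y)) x ≤
      1 * lipSlope g x + 0 * lipSlope g x := by
    refine lipSlope_le_combo zero_le_one le_rfl hg hg ?_
    intro δ hδ
    set r : ℝ := δ / (ε * Kf * Kh + 1) with hrdef
    have hr0 : 0 < r := by
      refine div_pos hδ ?_
      have : 0 ≤ ε * Kf * Kh := by positivity
      linarith
    have hball : ∀ᶠ y in 𝓝 x, dist x y < r := by
      filter_upwards [Metric.ball_mem_nhds x hr0] with y hy
      simpa [dist_comm] using hy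
    filter_upwards [hKf.filter_mono nhdsWithin_le_nhds, hKh.filter_mono nhdsWithin_le_nhds,
      hball.filter_mono nhdsWithin_le_nhds, self_mem_nhdsWithin] with y e1 e2 e3
        (hy : y ∈ ({x}ᶜ : Set X))
    have hd : 0 < dist x y := dist_pos.2 (Ne.symm hy)
    rw [hfx] at e1
    rw [hhx] at e2
    have hid : (g x + ε * (f x * h x)) - (g y + ε * (f y * h y))
        = (g x - g y) - ε * ((0 - f y) * (0 - h y)) := by rw [hfx, hhx]; ring
    have hnum : |(g x + ε * (f x * h x)) - (g y + ε * (f y * h y))| ≤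
        |g x - g y| + ε * (|0 - f y| * |0 - h y|) := by
      rw [hid]
      refine (abs_sub _ _).trans ?_
      rw [abs_mul, abs_mul, abs_of_nonneg hε.le]
    have hsmall : ε * (|0 - f y| * |0 - h y|) / dist x y ≤ δ := by
      have e4 : |0 - f y| * |0 - h y| ≤ (Kf * dist x y) * (Kh * dist x y) :=
        mul_le_mul e1 e2 (abs_nonneg _) (by positivity)
      have e5 : ε * (|0 - f y| * |0 - h y|) / dist x y
          ≤ ε * ((Kf * dist x y) * (Kh * dist x y)) / dist x y := by gcongr
      have e6 : ε * ((Kf * dist x y) * (Kh * dist x y)) / dist x y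
          = ε * Kf * Kh * dist x y := by field_simp
      have e7 : ε * Kf * Kh * dist x y ≤ (ε * Kf * Kh + 1) * r := by
        have h8 : ε * Kf * Kh * dist x y ≤ ε * Kf * Kh * r :=
          mul_le_mul_of_nonneg_left (le_of_lt e3) (by positivity)
        nlinarith
      have e8 : (ε * Kf * Kh + 1) * r = δ := by rw [hrdef]; field_simp
      linarith [e6 ▸ e5]
    calc |(g x + ε * (f x * h x)) - (g y + ε * (f y * h y))| / dist x y
        ≤ (|g x - g y| + ε * (|0 - f y| * |0 - h y|)) / dist x y := by gcongr
      _ = |g x - g y| / dist x y + ε * (|0 - f y| * |0 - h y|) / dist x y := by ring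
      _ ≤ 1 * (|g x - g y| / dist x y) + 0 * (|g x - g y| / dist x y) + δ := by linarith
  have hG0 : 0 ≤ lipSlope g x := lipSlope_nonneg hg
  have hL0 : 0 ≤ lipSlope (fun y => g y + ε * (f y * h y)) x :=
    lipSlope_nonneg (evB_combo hg (hf.mul hh) ε)
  rw [Efn]
  have hsq : (lipSlope (fun y => g y + ε * (f y * h y)) x) ^ 2 - (lipSlope g x) ^ 2 ≤ 0 := by
    nlinarith
  exact div_nonpos_of_nonpos_of_nonneg hsq (by positivity)

theorem Dplus_leibniz (f g h : X → ℝ)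
    (hf : LocallyLipschitz f) (hg : LocallyLipschitz g) (hh : LocallyLipschitz h)
    (hf0 : ∀ y, 0 ≤ f y) (hh0 : ∀ y, 0 ≤ h y) :
    ∀ x : X, Dplus (fun y => f y * h y) g x ≤ f x * Dplus h g x + h x * Dplus f g x := by
  intro x
  have hfE : EvB f x := evB_of_locallyLipschitz hf x
  have hgE : EvB g x := evB_of_locallyLipschitz hg x
  have hhE : EvB h x := evB_of_locallyLipschitz hh x
  have hfhE : EvB (fun y => f y * h y) x := hfE.mul hhE
  have hDrfl : ∀ u : X → ℝ, Dplus u g x = sInf (Efn g u x '' Set.Ioi 0) := fun u => rfl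
  have hbdd : ∀ u : X → ℝ, EvB u x → BddBelow (Efn g u x '' Set.Ioi 0) := by
    intro u hu
    refine ⟨-(lipSlope u x * lipSlope g x), ?_⟩
    rintro z ⟨ε, hε, rfl⟩
    exact Efn_lb hgE hu hε
  have hne : ∀ u : X → ℝ, (Efn g u x '' Set.Ioi 0).Nonempty :=
    fun u => ⟨_, ⟨1, Set.mem_Ioi.2 one_pos, rfl⟩⟩
  by_cases hab : f x + h x = 0
  · have hfx : f x = 0 := by linarith [hf0 x, hh0 x]
    have hhx : h x = 0 := by linarith [hf0 x, hh0 x]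
    have h1 : Dplus (fun y => f y * h y) g x ≤ Efn g (fun y => f y * h y) x 1 := by
      rw [hDrfl]
      exact csInf_le (hbdd _ hfhE) ⟨1, Set.mem_Ioi.2 one_pos, rfl⟩
    have h2 : Efn g (fun y => f y * h y) x 1 ≤ 0 := Efn_zero hfE hgE hhE hfx hhx one_pos
    rw [hfx, hhx]
    linarith
  · have hab' : 0 < f x + h x :=
      lt_of_le_of_ne (by linarith [hf0 x, hh0 x]) (Ne.symm hab)
    refine le_of_forall_sub_le fun δ hδ => sub_le_iff_le_add.2 ?_
    set δ₁ : ℝ := δ / (f x + h x) with hδ₁def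
    have hδ₁0 : 0 < δ₁ := div_pos hδ hab'
    obtain ⟨z₁, ⟨ε₁, hε₁, rfl⟩, hz₁⟩ :=
      exists_lt_of_csInf_lt (hne h) (lt_add_of_pos_right (sInf (Efn g h x '' Set.Ioi 0)) hδ₁0)
    obtain ⟨z₂, ⟨ε₂, hε₂, rfl⟩, hz₂⟩ :=
      exists_lt_of_csInf_lt (hne f) (lt_add_of_pos_right (sInf (Efn g f x '' Set.Ioi 0)) hδ₁0)
    rw [Set.mem_Ioi] at hε₁ hε₂
    set ε : ℝ := min ε₁ ε₂ with hεdef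
    have hε : 0 < ε := lt_min hε₁ hε₂
    have m1 : Efn g h x ε ≤ Efn g h x ε₁ := Efn_mono hgE hhE hε (min_le_left _ _)
    have m2 : Efn g f x ε ≤ Efn g f x ε₂ := Efn_mono hgE hfE hε (min_le_right _ _)
    have step : Dplus (fun y => f y * h y) g x ≤
        Efn g (fun y => f y * h y) x (ε / (f x + h x)) := by
      rw [hDrfl]
      exact csInf_le (hbdd _ hfhE) ⟨ε / (f x + h x), Set.mem_Ioi.2 (div_pos hε hab'), rfl⟩
    have core := Efn_core hfE hgE hhE (hf0 x) (hh0 x) hab' hε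
    have c1 : f x * Efn g h x ε ≤ f x * (Dplus h g x + δ₁) := by
      rw [hDrfl h]
      exact mul_le_mul_of_nonneg_left (m1.trans hz₁.le) (hf0 x)
    have c2 : h x * Efn g f x ε ≤ h x * (Dplus f g x + δ₁) := by
      rw [hDrfl f]
      exact mul_le_mul_of_nonneg_left (m2.trans hz₂.le) (hh0 x)
    have hδeq : (f x + h x) * δ₁ = δ := by rw [hδ₁def]; field_simp
    nlinarith [step, core, c1, c2]
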